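/- Let n ≥ 1, let F : ℝ^n → ℝ^n be continuously differentiable, and let K ⊆ ℝ^n be a compact set. Then ∫_{ℝ^n} N(y) dy = ∫_K |det DF_x| dx (as an identity of Lebesgue integrals of nonnegative functions, i.e. of lintegrals with values in [0,∞]), where N(y) denotes the number of points x ∈ K with F(x) = y, taken to be 0 when this set is infinite, and DF_x is the Fréchet derivative of F at x. -/

import Mathlib

open MeasureTheory Metric Set Filter
open scoped ENNReal Topology

/-- **Co-area formula for maps between spaces of the same dimension** (area formula): for a
continuously differentiable `F : ℝⁿ → ℝⁿ` and a compact set `K ⊆ ℝⁿ`, the Lebesgue integral over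
`y ∈ ℝⁿ` of the number of points `x ∈ K` with `F x = y` (counted as `0` if infinite) equals the
integral over `K` of the absolute value of the Jacobian determinant of `F`. -/
theorem coarea_same_dimension (n : ℕ) (hn : 1 ≤ n)
    (F : EuclideanSpace ℝ (Fin n) → EuclideanSpace ℝ (Fin n)) (hF : ContDiff ℝ 1 F)
    (K : Set (EuclideanSpace ℝ (Fin n))) (hK : IsCompact K) :
    ∫⁻ y, (({x ∈ K | F x = y}).ncard : ℝ≥0∞) ∂volume =
      ∫⁻ x in K, ENNReal.ofReal |(fderiv ℝ F x).det| ∂volume := by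
  classical
  have hKm : MeasurableSet K := hK.measurableSet
  have hder : ∀ x, HasFDerivAt F (fderiv ℝ F x) x := fun x =>
    ((hF.differentiable one_ne_zero) x).hasFDerivAt
  have hcont : Continuous fun x => (fderiv ℝ F x).det :=
    ContinuousLinearMap.continuous_det.comp (hF.continuous_fderiv one_ne_zero)
  set P : Set (EuclideanSpace ℝ (Fin n)) := K ∩ {x | (fderiv ℝ F x).det ≠ 0} with hPdef
  set Z : Set (EuclideanSpace ℝ (Fin n)) := K ∩ {x | (fderiv ℝ F x).det = 0} with hZdef
  have hPm : MeasurableSet P :=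
    hKm.inter ((isOpen_compl_singleton.preimage hcont).measurableSet)
  have hZm : MeasurableSet Z :=
    hKm.inter ((isClosed_singleton.preimage hcont).measurableSet)
  -- Sard: the image of the critical set is null
  have hsard : volume (F '' Z) = 0 :=
    addHaar_image_eq_zero_of_det_fderivWithin_eq_zero volume
      (fun x _ => (hder x).hasFDerivWithinAt) (fun x hx => hx.2)
  -- local injectivity on the set of regular points
  have hcover : ∀ x ∈ P, ∃ U : Set (EuclideanSpace ℝ (Fin n)), IsOpen U ∧ x ∈ U ∧ InjOn F U := by
    intro x hx
    have hdet : (fderiv ℝ F x).det ≠ 0 := hx.2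
    have hst : HasStrictFDerivAt F (fderiv ℝ F x) x :=
      hF.contDiffAt.hasStrictFDerivAt one_ne_zero
    have hst' : HasStrictFDerivAt F
        (((fderiv ℝ F x).toContinuousLinearEquivOfDetNeZero hdet : EuclideanSpace ℝ (Fin n) ≃L[ℝ] EuclideanSpace ℝ (Fin n)) :
          EuclideanSpace ℝ (Fin n) →L[ℝ] EuclideanSpace ℝ (Fin n)) x := by
      rwa [ContinuousLinearMap.coe_toContinuousLinearEquivOfDetNeZero]
    refine ⟨(HasStrictFDerivAt.toOpenPartialHomeomorph F hst').source, (HasStrictFDerivAt.toOpenPartialHomeomorph F hst').open_source,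
      HasStrictFDerivAt.mem_toOpenPartialHomeomorph_source hst', ?_⟩
    have := (HasStrictFDerivAt.toOpenPartialHomeomorph F hst').injOn
    rwa [HasStrictFDerivAt.toOpenPartialHomeomorph_coe] at this
  -- extract a countable cover
  have hnbd : ∀ x ∈ P, (if h : x ∈ P then (hcover x h).choose else (∅ : Set (EuclideanSpace ℝ (Fin n)))) ∈ 𝓝[P] x := by
    intro x hx
    rw [dif_pos hx]
    obtain ⟨hUo, hxU, -⟩ := (hcover x hx).choose_spec
    exact nhdsWithin_le_nhds (hUo.mem_nhds hxU)
  obtain ⟨t, htP, htc, htcov⟩ := TopologicalSpace.countable_cover_nhdsWithin hnbd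
  -- turn the countable cover into a sequence of open sets on which `F` is injective
  set C : Set (Set (EuclideanSpace ℝ (Fin n))) :=
    insert (∅ : Set (EuclideanSpace ℝ (Fin n))) ((fun x => if h : x ∈ P then (hcover x h).choose else ∅) '' t) with hC
  have hCc : C.Countable := (htc.image _).insert _
  have hCne : C.Nonempty := ⟨∅, mem_insert _ _⟩
  obtain ⟨V, hVr⟩ := (Set.Countable.exists_eq_range hCc hCne)
  have hVprop : ∀ m : ℕ, IsOpen (V m) ∧ InjOn F (V m) := by
    intro m
    have : V m ∈ C := by rw [hVr]; exact ⟨m, rfl⟩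
    rcases this with h | ⟨x, hxt, hxe⟩
    · simp only [h]; exact ⟨isOpen_empty, injOn_empty _⟩
    · simp only [dif_pos (htP hxt)] at hxe
      obtain ⟨hUo, -, hUinj⟩ := (hcover x (htP hxt)).choose_spec
      rw [← hxe]; exact ⟨hUo, hUinj⟩
  have hPsub : P ⊆ ⋃ m, V m := by
    intro x hx
    rcases mem_iUnion₂.1 (htcov hx) with ⟨z, hzt, hzx⟩
    have : (if h : z ∈ P then (hcover z h).choose else (∅ : Set (EuclideanSpace ℝ (Fin n)))) ∈ C :=
      mem_insert_of_mem _ ⟨z, hzt, rfl⟩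
    rw [hVr] at this
    rcases this with ⟨m, hm⟩
    exact mem_iUnion.2 ⟨m, hm ▸ hzx⟩
  -- disjointify
  set s : ℕ → Set (EuclideanSpace ℝ (Fin n)) := disjointed (fun m => P ∩ V m) with hs
  have hsm : ∀ m, MeasurableSet (s m) :=
    MeasurableSet.disjointed (fun m => hPm.inter (hVprop m).1.measurableSet)
  have hsub : ∀ m, s m ⊆ P ∩ V m := fun m => disjointed_subset _ m
  have hsdisj : Pairwise (Function.onFun Disjoint s) := disjoint_disjointed _
  have hsinj : ∀ m, InjOn F (s m) :=
    fun m => (hVprop m).2.mono ((hsub m).trans inter_subset_right)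
  have hsU : ⋃ m, s m = P := by
    rw [hs, iUnion_disjointed, ← inter_iUnion, inter_eq_self_of_subset_left hPsub]
  have hsf : ∀ m, ∀ x ∈ s m, HasFDerivWithinAt F (fderiv ℝ F x) (s m) x :=
    fun m x _ => (hder x).hasFDerivWithinAt
  -- the change-of-variables formula on each piece
  have key : ∀ m, (∫⁻ x in s m, ENNReal.ofReal |(fderiv ℝ F x).det| ∂volume)
      = volume (F '' s m) :=
    fun m => lintegral_abs_det_fderiv_eq_addHaar_image volume (hsm m) (hsf m) (hsinj m)
  have himg : ∀ m, MeasurableSet (F '' s m) :=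
    fun m => measurable_image_of_fderivWithin (hsm m) (hsf m) (hsinj m)
  -- the counting function on the regular part
  have hfib : ∀ y : EuclideanSpace ℝ (Fin n), MeasurableSet {x | F x = y} := fun y =>
    (isClosed_singleton.preimage hF.continuous).measurableSet
  have claim1 : ∀ y : EuclideanSpace ℝ (Fin n), Measure.count (P ∩ {x | F x = y})
      = ∑' m, Set.indicator (F '' s m) 1 y := by
    intro y
    have h1 : P ∩ {x | F x = y} = ⋃ m, s m ∩ {x | F x = y} := by
      rw [← hsU, iUnion_inter]
    rw [h1, measure_iUnion (fun i j hij => ((hsdisj hij).mono inter_subset_left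
      inter_subset_left)) (fun m => (hsm m).inter (hfib y))]
    congr 1
    ext m
    by_cases hy : y ∈ F '' s m
    · obtain ⟨x, hxs, hxy⟩ := hy
      have : s m ∩ {x | F x = y} = {x} := by
        ext z
        constructor
        · rintro ⟨hzs, hzy⟩
          exact hsinj m hzs hxs (by rw [hzy, hxy])
        · rintro rfl; exact ⟨hxs, hxy⟩
      have hy' : y ∈ F '' s m := ⟨x, hxs, hxy⟩
      rw [this, Measure.count_singleton, Set.indicator_of_mem hy']
      rfl
    · have : s m ∩ {x | F x = y} = ∅ := by
        ext z
        simp only [mem_inter_iff, mem_setOf_eq, mem_empty_iff_false, iff_false, not_and]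
        intro hzs hzy
        exact hy ⟨z, hzs, hzy⟩
      rw [this, measure_empty, Set.indicator_of_notMem hy]
  -- integrating the counting function over the regular part
  have claim2 : (∫⁻ y, ∑' m, Set.indicator (F '' s m) 1 y ∂volume)
      = ∑' m, volume (F '' s m) := by
    refine (lintegral_tsum (fun m => (measurable_const.indicator (himg m)).aemeasurable)).trans ?_
    exact tsum_congr fun m => lintegral_indicator_one (himg m)
  -- the integral over the regular part
  have hPint : (∫⁻ x in P, ENNReal.ofReal |(fderiv ℝ F x).det| ∂volume)
      = ∑' m, volume (F '' s m) := by
    rw [← hsU, lintegral_iUnion hsm hsdisj]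
    exact tsum_congr key
  -- splitting the integral over K
  have hKsplit : (∫⁻ x in K, ENNReal.ofReal |(fderiv ℝ F x).det| ∂volume)
      = ∫⁻ x in P, ENNReal.ofReal |(fderiv ℝ F x).det| ∂volume := by
    have hKPZ : K = P ∪ Z := by
      rw [hPdef, hZdef, ← inter_union_distrib_left]
      have huniv : {x | (fderiv ℝ F x).det ≠ 0} ∪ {x | (fderiv ℝ F x).det = 0} = univ := by
        ext x
        simp only [mem_union, mem_setOf_eq, mem_univ, iff_true]
        exact ne_or_eq _ _
      rw [huniv, inter_univ]
    have hdisj : Disjoint P Z := by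
      refine Set.disjoint_left.2 ?_
      rintro x ⟨-, hx1⟩ ⟨-, hx2⟩
      exact hx1 hx2
    rw [hKPZ, lintegral_union hZm hdisj]
    have hZ0 : (∫⁻ x in Z, ENNReal.ofReal |(fderiv ℝ F x).det| ∂volume) = 0 := by
      rw [setLIntegral_congr_fun_ae hZm (Filter.Eventually.of_forall
        (fun x hx => by
          have hx2 : (fderiv ℝ F x).det = 0 := hx.2
          simp [hx2] : ∀ x ∈ Z, ENNReal.ofReal |(fderiv ℝ F x).det| = 0))]
      simp
    rw [hZ0, add_zero]
  -- finiteness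
  obtain ⟨Cb, hCb⟩ := hK.exists_bound_of_continuousOn hcont.continuousOn
  have hfin : (∫⁻ x in K, ENNReal.ofReal |(fderiv ℝ F x).det| ∂volume) ≠ ⊤ := by
    have hb : (∫⁻ x in K, ENNReal.ofReal |(fderiv ℝ F x).det| ∂volume)
        ≤ ∫⁻ _ in K, ENNReal.ofReal Cb ∂volume := by
      refine setLIntegral_mono measurable_const (fun x hx => ?_)
      exact ENNReal.ofReal_le_ofReal (by simpa using hCb x hx)
    refine ne_top_of_le_ne_top ?_ hb
    rw [setLIntegral_const]
    exact ENNReal.mul_ne_top ENNReal.ofReal_ne_top hK.measure_lt_top.ne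
  have hsumfin : (∫⁻ y, ∑' m, Set.indicator (F '' s m) 1 y ∂volume) ≠ ⊤ := by
    rw [claim2, ← hPint, ← hKsplit]; exact hfin
  have hmeas : Measurable fun y => ∑' m, Set.indicator (F '' s m) 1 y :=
    Measurable.ennreal_tsum (fun m => measurable_const.indicator (himg m))
  have hae1 : ∀ᵐ y ∂(volume : Measure (EuclideanSpace ℝ (Fin n))),
      (∑' m, Set.indicator (F '' s m) 1 y) < ⊤ := ae_lt_top hmeas hsumfin
  have hae2 : ∀ᵐ y ∂(volume : Measure (EuclideanSpace ℝ (Fin n))), y ∉ F '' Z :=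
    measure_eq_zero_iff_ae_notMem.1 hsard
  -- a.e. identification of the integrands
  have haeeq : ∀ᵐ y ∂(volume : Measure (EuclideanSpace ℝ (Fin n))),
      (({x ∈ K | F x = y}).ncard : ℝ≥0∞) = ∑' m, Set.indicator (F '' s m) 1 y := by
    filter_upwards [hae1, hae2] with y h1 h2
    have hset : {x ∈ K | F x = y} = P ∩ {x | F x = y} := by
      ext x
      simp only [mem_setOf_eq, mem_inter_iff, hPdef]
      constructor
      · rintro ⟨hxK, hxy⟩
        refine ⟨⟨hxK, fun hdet0 => h2 ⟨x, ⟨hxK, hdet0⟩, hxy⟩⟩, hxy⟩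
      · rintro ⟨⟨hxK, -⟩, hxy⟩
        exact ⟨hxK, hxy⟩
    have hcount : Measure.count (P ∩ {x | F x = y})
        = ∑' m, Set.indicator (F '' s m) 1 y := claim1 y
    have hfinite : (P ∩ {x | F x = y}).Finite := by
      by_contra hinf
      rw [Measure.count_apply_infinite hinf] at hcount
      rw [← hcount] at h1
      exact lt_irrefl _ h1
    rw [hset, ← hcount, Measure.count_apply_finite _ hfinite,
      Set.ncard_eq_toFinset_card _ hfinite]
  rw [lintegral_congr_ae haeeq, claim2, ← hPint, ← hKsplit]
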